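/- Let u ∈ ℤ^r and let R be a positive integer. Then the number of integer points z ∈ ℤ^r whose ℓ∞-distance to the line segment {t·u : t ∈ [0,1]} is at most R is at most (‖u‖₁ + 1)·(2R + 1)^r. -/

import Mathlib

open Finset

private lemma floor_key (u : ℤ) {τ1 τ2 : ℝ} (h0 : 0 ≤ τ1) (h12 : τ1 ≤ τ2) :
    (⌊τ1 * (u : ℝ)⌋).natAbs ≤ (⌊τ2 * (u : ℝ)⌋).natAbs ∧
      ((⌊τ1 * (u : ℝ)⌋).natAbs = (⌊τ2 * (u : ℝ)⌋).natAbs →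
        ⌊τ1 * (u : ℝ)⌋ = ⌊τ2 * (u : ℝ)⌋) := by
  rcases le_total 0 u with hu | hu
  · have hu' : (0 : ℝ) ≤ (u : ℝ) := by exact_mod_cast hu
    have h : τ1 * (u : ℝ) ≤ τ2 * (u : ℝ) := by nlinarith
    have hab := Int.floor_mono h
    have ha : 0 ≤ ⌊τ1 * (u : ℝ)⌋ := Int.floor_nonneg.mpr (mul_nonneg h0 hu')
    omega
  · have hu' : (u : ℝ) ≤ 0 := by exact_mod_cast hu
    have h : τ2 * (u : ℝ) ≤ τ1 * (u : ℝ) := by nlinarith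
    have hab := Int.floor_mono h
    have ha : ⌊τ1 * (u : ℝ)⌋ ≤ 0 := by
      have : τ1 * (u : ℝ) ≤ 0 := mul_nonpos_of_nonneg_of_nonpos h0 hu'
      exact Int.floor_nonpos this
    omega

private lemma floor_natAbs_le (u : ℤ) {τ : ℝ} (h0 : 0 ≤ τ) (h1 : τ ≤ 1) :
    (⌊τ * (u : ℝ)⌋).natAbs ≤ u.natAbs := by
  have h2 : |(u : ℝ)| = (u.natAbs : ℝ) := by
    simp [Nat.cast_natAbs]
  have hb : |τ * (u : ℝ)| ≤ (u.natAbs : ℝ) := by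
    rw [abs_mul, abs_of_nonneg h0, h2]
    nlinarith [abs_nonneg (u : ℝ), h2, Nat.cast_nonneg (α := ℝ) u.natAbs]
  have hup : ⌊τ * (u : ℝ)⌋ ≤ (u.natAbs : ℤ) := by
    have := Int.floor_mono (le_trans (le_abs_self _) hb)
    rw [Int.floor_natCast] at this
    simpa using this
  have hlo : -(u.natAbs : ℤ) ≤ ⌊τ * (u : ℝ)⌋ := by
    apply Int.le_floor.mpr
    push_cast
    linarith [neg_abs_le (τ * (u : ℝ)), hb, h2]
  omega

private lemma floors_eq (r : ℕ) (u : Fin r → ℤ) {τ1 τ2 : ℝ}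
    (h1 : 0 ≤ τ1) (h2 : 0 ≤ τ2)
    (hg : ∑ k, (⌊τ1 * (u k : ℝ)⌋).natAbs = ∑ k, (⌊τ2 * (u k : ℝ)⌋).natAbs) :
    ∀ k, ⌊τ1 * (u k : ℝ)⌋ = ⌊τ2 * (u k : ℝ)⌋ := by
  rcases le_total τ1 τ2 with h12 | h12
  · have hle : ∀ k ∈ Finset.univ, (⌊τ1 * (u k : ℝ)⌋).natAbs ≤ (⌊τ2 * (u k : ℝ)⌋).natAbs :=
      fun k _ => (floor_key (u k) h1 h12).1
    have := (Finset.sum_eq_sum_iff_of_le hle).mp hg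
    exact fun k => (floor_key (u k) h1 h12).2 (this k (Finset.mem_univ k))
  · have hle : ∀ k ∈ Finset.univ, (⌊τ2 * (u k : ℝ)⌋).natAbs ≤ (⌊τ1 * (u k : ℝ)⌋).natAbs :=
      fun k _ => (floor_key (u k) h2 h12).1
    have := (Finset.sum_eq_sum_iff_of_le hle).mp hg.symm
    exact fun k => ((floor_key (u k) h2 h12).2 (this k (Finset.mem_univ k))).symm

/-- The number of integer points within `ℓ∞`-distance `R` of
the line segment from `0` to `u ∈ ℤ^r` is at most `(‖u‖₁ + 1)·(2R + 1)^r`. -/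
theorem lattice_points_near_segment
    (r : ℕ) (u : Fin r → ℤ) (R : ℕ) (hR : 1 ≤ R) :
    {z : Fin r → ℤ | ∃ τ ∈ Set.Icc (0 : ℝ) 1,
        ∀ k, |(z k : ℝ) - τ * (u k : ℝ)| ≤ (R : ℝ)}.Finite ∧
      {z : Fin r → ℤ | ∃ τ ∈ Set.Icc (0 : ℝ) 1,
        ∀ k, |(z k : ℝ) - τ * (u k : ℝ)| ≤ (R : ℝ)}.ncard ≤
        ((∑ k, (u k).natAbs) + 1) * (2 * R + 1) ^ r := by
  classical
  set N : ℕ := ∑ k, (u k).natAbs with hN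
  set S : Set (Fin r → ℤ) := {z : Fin r → ℤ | ∃ τ ∈ Set.Icc (0 : ℝ) 1,
      ∀ k, |(z k : ℝ) - τ * (u k : ℝ)| ≤ (R : ℝ)} with hS
  set T : Finset (ℕ × (Fin r → ℤ)) :=
    Finset.range (N + 1) ×ˢ Fintype.piFinset (fun _ : Fin r => Finset.Icc (-(R : ℤ)) R) with hT
  -- the map
  set f : (Fin r → ℤ) → ℕ × (Fin r → ℤ) := fun z =>
    if h : z ∈ S then
      (∑ k, (⌊h.choose * (u k : ℝ)⌋).natAbs, fun k => z k - ⌊h.choose * (u k : ℝ)⌋)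
    else (0, fun _ => 0) with hf
  have hmaps : ∀ z ∈ S, f z ∈ T := by
    intro z hz
    have hspec := hz.choose_spec
    set τ := hz.choose with hτdef
    obtain ⟨⟨hτ0, hτ1⟩, hball⟩ := hspec
    rw [hf]
    simp only [dif_pos hz]
    rw [← hτdef]
    rw [hT, Finset.mem_product]
    dsimp only
    constructor
    · rw [Finset.mem_range, Nat.lt_succ_iff, hN]
      exact Finset.sum_le_sum fun k _ => floor_natAbs_le (u k) hτ0 hτ1
    · rw [Fintype.mem_piFinset]
      intro k
      rw [Finset.mem_Icc]
      have hb := abs_le.mp (hball k)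
      have hfl := Int.floor_le (τ * (u k : ℝ))
      have hfl2 := Int.lt_floor_add_one (τ * (u k : ℝ))
      constructor
      · have : (-(R : ℝ)) ≤ ((z k - ⌊τ * (u k : ℝ)⌋ : ℤ) : ℝ) := by
          push_cast; linarith [hb.1]
        exact_mod_cast this
      · have : ((z k - ⌊τ * (u k : ℝ)⌋ : ℤ) : ℝ) < (R : ℝ) + 1 := by
          push_cast; linarith [hb.2]
        have h' : (z k - ⌊τ * (u k : ℝ)⌋ : ℤ) < (R : ℤ) + 1 := by exact_mod_cast this
        omega
  have hinj : Set.InjOn f S := by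
    intro z1 hz1 z2 hz2 heq
    obtain ⟨⟨h10, h11⟩, hb1⟩ := hz1.choose_spec
    obtain ⟨⟨h20, h21⟩, hb2⟩ := hz2.choose_spec
    rw [hf] at heq
    simp only [dif_pos hz1, dif_pos hz2, Prod.mk.injEq] at heq
    obtain ⟨hsum, hw⟩ := heq
    have hfl := floors_eq r u h10 h20 hsum
    funext k
    have := congrFun hw k
    have h2 := hfl k
    omega
  have hsub : f '' S ⊆ ↑T := by
    rintro _ ⟨z, hz, rfl⟩
    exact hmaps z hz
  have hfinim : (f '' S).Finite := T.finite_toSet.subset hsub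
  have hfin : S.Finite := Set.Finite.of_finite_image hfinim hinj
  refine ⟨hfin, ?_⟩
  have h1 : S.ncard = (f '' S).ncard := (Set.ncard_image_of_injOn hinj).symm
  have h2 : (f '' S).ncard ≤ (↑T : Set (ℕ × (Fin r → ℤ))).ncard :=
    Set.ncard_le_ncard hsub T.finite_toSet
  have h3 : (↑T : Set (ℕ × (Fin r → ℤ))).ncard = T.card := Set.ncard_coe_finset T
  have h4 : T.card = (N + 1) * (2 * R + 1) ^ r := by
    rw [hT, Finset.card_product, Finset.card_range, Fintype.card_piFinset]
    congr 1
    rw [Finset.prod_const, Finset.card_univ, Fintype.card_fin]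
    congr 1
    rw [Int.card_Icc]
    omega
  omega
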